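/- Let p ∈ ℝ[X,Y,Z] be a polynomial that vanishes at every point of the four faces of Ω contained in the planes {ξ = 0}, {ζ = 0}, {ξ+ζ = 1}, {η+ζ = 1}; that is, p(0,η,ζ) = 0 whenever 0 ≤ ζ ≤ 1 and 0 ≤ η ≤ 1−ζ; p(ξ,η,0) = 0 whenever 0 ≤ ξ ≤ 1 and 0 ≤ η ≤ 1; p(1−ζ,η,ζ) = 0 whenever 0 ≤ ζ ≤ 1 and 0 ≤ η ≤ 1−ζ; and p(ξ,1−ζ,ζ) = 0 whenever 0 ≤ ζ ≤ 1 and 0 ≤ ξ ≤ 1−ζ. Then the polynomial X·Z·(X+Z−1)·(Y+Z−1) divides p in ℝ[X,Y,Z]. -/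

import Mathlib

open MvPolynomial

private lemma evalFin0_inj : Function.Injective (MvPolynomial.eval (fun _ : Fin 0 => (0:ℝ))) := by
  intro a b h
  obtain ⟨x, rfl⟩ := MvPolynomial.C_surjective (Fin 0) a
  obtain ⟨y, rfl⟩ := MvPolynomial.C_surjective (Fin 0) b
  simp only [MvPolynomial.eval_C] at h
  rw [h]

private lemma poly_zero_of_Icc {P : Polynomial ℝ}
    (h : ∀ x : ℝ, 0 ≤ x → x ≤ 1/2 → Polynomial.eval x P = 0) : P = 0 := by
  apply Polynomial.eq_zero_of_infinite_isRoot
  exact (Set.Icc_infinite (by norm_num : (0:ℝ) < 1/2)).mono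
    (fun x hx => h x hx.1 hx.2)

private lemma mv2_zero (q : MvPolynomial (Fin 2) ℝ)
    (h : ∀ a b : ℝ, 0 ≤ a → a ≤ 1/2 → 0 ≤ b → b ≤ 1/2 → eval ![a,b] q = 0) :
    q = 0 := by
  have hq : finSuccEquiv ℝ 1 q = 0 := by
    ext n : 1
    rw [Polynomial.coeff_zero]
    have hc : ∀ b : ℝ, 0 ≤ b → b ≤ 1/2 →
        eval ![b] ((finSuccEquiv ℝ 1 q).coeff n) = 0 := by
      intro b hb0 hb1
      have hPb : Polynomial.map (eval ![b]) (finSuccEquiv ℝ 1 q) = 0 := by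
        apply poly_zero_of_Icc
        intro a ha0 ha1
        rw [← MvPolynomial.eval_eq_eval_mv_eval' ![b] a q]
        exact h a b ha0 ha1 hb0 hb1
      have := congrArg (fun P => Polynomial.coeff P n) hPb
      simpa [Polynomial.coeff_map] using this
    set c := (finSuccEquiv ℝ 1 q).coeff n with hcdef
    have hC1 : Polynomial.map (eval fun _ : Fin 0 => (0:ℝ)) (finSuccEquiv ℝ 0 c) = 0 := by
      apply poly_zero_of_Icc
      intro b hb0 hb1
      rw [← MvPolynomial.eval_eq_eval_mv_eval' (fun _ : Fin 0 => (0:ℝ)) b c]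
      have hv : (Fin.cons b (fun _ : Fin 0 => (0:ℝ)) : Fin 1 → ℝ) = ![b] := by
        funext i; fin_cases i; rfl
      rw [hv]
      exact hc b hb0 hb1
    have h0 : finSuccEquiv ℝ 0 c = 0 := by
      apply Polynomial.map_injective _ evalFin0_inj
      simpa using hC1
    exact (map_eq_zero_iff _ (AlgEquiv.injective _)).mp h0
  exact (map_eq_zero_iff _ (AlgEquiv.injective _)).mp hq

private lemma div_aux (p : MvPolynomial (Fin 3) ℝ) (a : MvPolynomial (Fin 2) ℝ)
    (h : ∀ b c : ℝ, 0 ≤ b → b ≤ 1/2 → 0 ≤ c → c ≤ 1/2 →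
      eval ![eval ![b,c] a, b, c] p = 0) :
    (finSuccEquiv ℝ 2).symm (Polynomial.X - Polynomial.C a) ∣ p := by
  have hroot : (Polynomial.X - Polynomial.C a) ∣ finSuccEquiv ℝ 2 p := by
    rw [Polynomial.dvd_iff_isRoot]
    show Polynomial.eval a (finSuccEquiv ℝ 2 p) = 0
    apply mv2_zero
    intro b c hb0 hb1 hc0 hc1
    have key : eval ![b,c] (Polynomial.eval a (finSuccEquiv ℝ 2 p))
        = Polynomial.eval (eval ![b,c] a) (Polynomial.map (eval ![b,c]) (finSuccEquiv ℝ 2 p)) := by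
      rw [Polynomial.eval_map, Polynomial.eval₂_at_apply]
    rw [key, ← MvPolynomial.eval_eq_eval_mv_eval']
    exact h b c hb0 hb1 hc0 hc1
  have hd := map_dvd (finSuccEquiv ℝ 2).symm hroot
  rwa [AlgEquiv.symm_apply_apply] at hd

private lemma symm_X0 :
    (finSuccEquiv ℝ 2).symm (Polynomial.X - Polynomial.C 0) = (X 0 : MvPolynomial (Fin 3) ℝ) := by
  rw [AlgEquiv.symm_apply_eq]
  simp [finSuccEquiv_X_zero]

private lemma symm_X0X2 :
    (finSuccEquiv ℝ 2).symm (Polynomial.X - Polynomial.C (1 - X 1))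
      = (X 0 + X 2 - 1 : MvPolynomial (Fin 3) ℝ) := by
  rw [AlgEquiv.symm_apply_eq]
  have h2 : (X 2 : MvPolynomial (Fin 3) ℝ) = X (Fin.succ 1) := rfl
  have he : (finSuccEquiv ℝ 2) (X 0 + X 2 - 1 : MvPolynomial (Fin 3) ℝ)
      = Polynomial.X + Polynomial.C (X 1) - 1 := by
    rw [h2, map_sub, map_add, finSuccEquiv_X_zero, finSuccEquiv_X_succ, map_one]
  rw [he, map_sub Polynomial.C, Polynomial.C_1]
  ring

private lemma prime_symm (a : MvPolynomial (Fin 2) ℝ) :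
    Prime ((finSuccEquiv ℝ 2).symm (Polynomial.X - Polynomial.C a)) := by
  refine comap_prime (finSuccEquiv ℝ 2) (finSuccEquiv ℝ 2).symm
    (fun x => (finSuccEquiv ℝ 2).symm_apply_apply x) ?_
  rw [AlgEquiv.apply_symm_apply]
  exact Polynomial.prime_X_sub_C a

private lemma prime_comap (σ : Equiv.Perm (Fin 3)) {x : MvPolynomial (Fin 3) ℝ}
    (h : Prime (rename σ x)) : Prime x := by
  refine comap_prime (rename (σ : Fin 3 → Fin 3) : MvPolynomial (Fin 3) ℝ →ₐ[ℝ] _)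
    (rename (σ.symm : Fin 3 → Fin 3) : MvPolynomial (Fin 3) ℝ →ₐ[ℝ] _) (fun a => ?_) h
  show rename (σ.symm : Fin 3 → Fin 3) (rename (σ : Fin 3 → Fin 3) a) = a
  rw [rename_rename]
  have hid : (σ.symm : Fin 3 → Fin 3) ∘ (σ : Fin 3 → Fin 3) = id :=
    funext fun x => σ.symm_apply_apply x
  rw [hid, rename_id, AlgHom.id_apply]

private lemma not_dvd_of_eval (u v : MvPolynomial (Fin 3) ℝ) (w : Fin 3 → ℝ)
    (hu : eval w u = 0) (hv : eval w v ≠ 0) : ¬ u ∣ v := by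
  rintro ⟨c, rfl⟩
  exact hv (by rw [map_mul, hu, zero_mul])

/-- a real polynomial in three variables which vanishes on the four faces of
the reference pyramid contained in the planes `ξ = 0`, `ζ = 0`, `ξ + ζ = 1`, `η + ζ = 1`
is divisible by `X·Z·(X+Z−1)·(Y+Z−1)` in `ℝ[X,Y,Z]`. -/
theorem pyramid_face_vanishing_divisibility (p : MvPolynomial (Fin 3) ℝ)
    (h1 : ∀ η ζ : ℝ, 0 ≤ ζ → ζ ≤ 1 → 0 ≤ η → η ≤ 1 - ζ →
      MvPolynomial.eval ![0, η, ζ] p = 0)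
    (h2 : ∀ ξ η : ℝ, 0 ≤ ξ → ξ ≤ 1 → 0 ≤ η → η ≤ 1 →
      MvPolynomial.eval ![ξ, η, 0] p = 0)
    (h3 : ∀ η ζ : ℝ, 0 ≤ ζ → ζ ≤ 1 → 0 ≤ η → η ≤ 1 - ζ →
      MvPolynomial.eval ![1 - ζ, η, ζ] p = 0)
    (h4 : ∀ ξ ζ : ℝ, 0 ≤ ζ → ζ ≤ 1 → 0 ≤ ξ → ξ ≤ 1 - ζ →
      MvPolynomial.eval ![ξ, 1 - ζ, ζ] p = 0) :
    (X 0 * X 2 * (X 0 + X 2 - 1) * (X 1 + X 2 - 1) : MvPolynomial (Fin 3) ℝ) ∣ p := by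
  -- divisibility by X 0
  have d1 : (X 0 : MvPolynomial (Fin 3) ℝ) ∣ p := by
    rw [← symm_X0]
    apply div_aux
    intro b c hb0 hb1 hc0 hc1
    have hv : (![eval ![b,c] (0 : MvPolynomial (Fin 2) ℝ), b, c] : Fin 3 → ℝ) = ![0, b, c] := by
      simp
    rw [hv]
    exact h1 b c hc0 (by linarith) hb0 (by linarith)
  -- divisibility by X 0 + X 2 - 1
  have d3 : (X 0 + X 2 - 1 : MvPolynomial (Fin 3) ℝ) ∣ p := by
    rw [← symm_X0X2]
    apply div_aux
    intro b c hb0 hb1 hc0 hc1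
    have hv : (![eval ![b,c] (1 - X 1 : MvPolynomial (Fin 2) ℝ), b, c] : Fin 3 → ℝ)
        = ![1 - c, b, c] := by simp
    rw [hv]
    exact h3 b c hc0 (by linarith) hb0 (by linarith)
  -- divisibility by X 2, via the swap (0 2)
  have d2 : (X 2 : MvPolynomial (Fin 3) ℝ) ∣ p := by
    have hd : (X 0 : MvPolynomial (Fin 3) ℝ) ∣ rename (Equiv.swap (0:Fin 3) 2) p := by
      rw [← symm_X0]
      apply div_aux
      intro b c hb0 hb1 hc0 hc1
      have hv : (![eval ![b,c] (0 : MvPolynomial (Fin 2) ℝ), b, c] : Fin 3 → ℝ)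
          = ![0, b, c] := by simp
      rw [hv, eval_rename]
      have hv2 : (![(0:ℝ), b, c] ∘ Equiv.swap (0:Fin 3) 2) = ![c, b, 0] := by
        funext i
        fin_cases i <;> simp [Equiv.swap_apply_def]
      rw [hv2]
      exact h2 c b hc0 (by linarith) hb0 (by linarith)
    have h' := map_dvd (rename (Equiv.swap (0:Fin 3) 2 : Fin 3 → Fin 3) :
      MvPolynomial (Fin 3) ℝ →ₐ[ℝ] MvPolynomial (Fin 3) ℝ) hd
    have e1 : rename (Equiv.swap (0:Fin 3) 2 : Fin 3 → Fin 3) (X 0 : MvPolynomial (Fin 3) ℝ)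
        = X 2 := by rw [rename_X]; norm_num
    have e2 : rename (Equiv.swap (0:Fin 3) 2 : Fin 3 → Fin 3)
        (rename (Equiv.swap (0:Fin 3) 2 : Fin 3 → Fin 3) p) = p := by
      rw [rename_rename]
      have hid : (Equiv.swap (0:Fin 3) 2 : Fin 3 → Fin 3) ∘ (Equiv.swap (0:Fin 3) 2) = id :=
        funext fun x => Equiv.swap_apply_self _ _ x
      rw [hid, rename_id, AlgHom.id_apply]
    rwa [show ((rename (Equiv.swap (0:Fin 3) 2 : Fin 3 → Fin 3) :
        MvPolynomial (Fin 3) ℝ →ₐ[ℝ] MvPolynomial (Fin 3) ℝ) (X 0) : MvPolynomial (Fin 3) ℝ)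
        = X 2 from e1,
      show ((rename (Equiv.swap (0:Fin 3) 2 : Fin 3 → Fin 3) :
        MvPolynomial (Fin 3) ℝ →ₐ[ℝ] MvPolynomial (Fin 3) ℝ)
        (rename (Equiv.swap (0:Fin 3) 2 : Fin 3 → Fin 3) p)) = p from e2] at h'
  -- divisibility by X 1 + X 2 - 1, via the swap (0 1)
  have d4 : (X 1 + X 2 - 1 : MvPolynomial (Fin 3) ℝ) ∣ p := by
    have hd : (X 0 + X 2 - 1 : MvPolynomial (Fin 3) ℝ) ∣ rename (Equiv.swap (0:Fin 3) 1) p := by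
      rw [← symm_X0X2]
      apply div_aux
      intro b c hb0 hb1 hc0 hc1
      have hv : (![eval ![b,c] (1 - X 1 : MvPolynomial (Fin 2) ℝ), b, c] : Fin 3 → ℝ)
          = ![1 - c, b, c] := by simp
      rw [hv, eval_rename]
      have hv2 : (![1 - c, b, c] ∘ Equiv.swap (0:Fin 3) 1) = ![b, 1 - c, c] := by
        funext i
        fin_cases i <;> simp [Equiv.swap_apply_def]
      rw [hv2]
      exact h4 b c hc0 (by linarith) hb0 (by linarith)
    have h' := map_dvd (rename (Equiv.swap (0:Fin 3) 1 : Fin 3 → Fin 3) :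
      MvPolynomial (Fin 3) ℝ →ₐ[ℝ] MvPolynomial (Fin 3) ℝ) hd
    have e1 : rename (Equiv.swap (0:Fin 3) 1 : Fin 3 → Fin 3)
        (X 0 + X 2 - 1 : MvPolynomial (Fin 3) ℝ) = X 1 + X 2 - 1 := by
      have s0 : (Equiv.swap (0:Fin 3) 1) 0 = 1 := by decide
      have s2 : (Equiv.swap (0:Fin 3) 1) 2 = 2 := by decide
      rw [map_sub, map_add, rename_X, rename_X, s0, s2, map_one]
    have e2 : rename (Equiv.swap (0:Fin 3) 1 : Fin 3 → Fin 3)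
        (rename (Equiv.swap (0:Fin 3) 1 : Fin 3 → Fin 3) p) = p := by
      rw [rename_rename]
      have hid : (Equiv.swap (0:Fin 3) 1 : Fin 3 → Fin 3) ∘ (Equiv.swap (0:Fin 3) 1) = id :=
        funext fun x => Equiv.swap_apply_self _ _ x
      rw [hid, rename_id, AlgHom.id_apply]
    rwa [show ((rename (Equiv.swap (0:Fin 3) 1 : Fin 3 → Fin 3) :
        MvPolynomial (Fin 3) ℝ →ₐ[ℝ] MvPolynomial (Fin 3) ℝ) (X 0 + X 2 - 1)
        : MvPolynomial (Fin 3) ℝ) = X 1 + X 2 - 1 from e1,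
      show ((rename (Equiv.swap (0:Fin 3) 1 : Fin 3 → Fin 3) :
        MvPolynomial (Fin 3) ℝ →ₐ[ℝ] MvPolynomial (Fin 3) ℝ)
        (rename (Equiv.swap (0:Fin 3) 1 : Fin 3 → Fin 3) p)) = p from e2] at h'
  -- primes
  have prime2 : Prime (X 2 : MvPolynomial (Fin 3) ℝ) := by
    apply prime_comap (Equiv.swap (0:Fin 3) 2)
    have : rename (Equiv.swap (0:Fin 3) 2 : Fin 3 → Fin 3) (X 2 : MvPolynomial (Fin 3) ℝ)
        = X 0 := by rw [rename_X]; norm_num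
    rw [this, ← symm_X0]
    exact prime_symm 0
  have prime3 : Prime (X 0 + X 2 - 1 : MvPolynomial (Fin 3) ℝ) := by
    rw [← symm_X0X2]; exact prime_symm _
  have prime4 : Prime (X 1 + X 2 - 1 : MvPolynomial (Fin 3) ℝ) := by
    apply prime_comap (Equiv.swap (0:Fin 3) 1)
    have : rename (Equiv.swap (0:Fin 3) 1 : Fin 3 → Fin 3)
        (X 1 + X 2 - 1 : MvPolynomial (Fin 3) ℝ) = X 0 + X 2 - 1 := by
      have s1 : (Equiv.swap (0:Fin 3) 1) 1 = 0 := by decide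
      have s2 : (Equiv.swap (0:Fin 3) 1) 2 = 2 := by decide
      rw [map_sub, map_add, rename_X, rename_X, s1, s2, map_one]
    rw [this]
    exact prime3
  -- non-divisibilities
  have n21 : ¬ (X 2 : MvPolynomial (Fin 3) ℝ) ∣ X 0 :=
    not_dvd_of_eval _ _ ![1,0,0] (by simp) (by simp)
  have n31 : ¬ (X 0 + X 2 - 1 : MvPolynomial (Fin 3) ℝ) ∣ X 0 :=
    not_dvd_of_eval _ _ ![1,0,0] (by simp) (by simp)
  have n32 : ¬ (X 0 + X 2 - 1 : MvPolynomial (Fin 3) ℝ) ∣ X 2 :=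
    not_dvd_of_eval _ _ ![0,0,1] (by simp) (by simp)
  have n41 : ¬ (X 1 + X 2 - 1 : MvPolynomial (Fin 3) ℝ) ∣ X 0 :=
    not_dvd_of_eval _ _ ![1,1,0] (by simp) (by simp)
  have n42 : ¬ (X 1 + X 2 - 1 : MvPolynomial (Fin 3) ℝ) ∣ X 2 :=
    not_dvd_of_eval _ _ ![0,0,1] (by simp) (by simp)
  have n43 : ¬ (X 1 + X 2 - 1 : MvPolynomial (Fin 3) ℝ) ∣ (X 0 + X 2 - 1) :=
    not_dvd_of_eval _ _ ![0,1,0] (by simp) (by simp)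
  -- combine
  obtain ⟨q1, hq1⟩ := d1
  have d2' : (X 2 : MvPolynomial (Fin 3) ℝ) ∣ q1 :=
    (prime2.dvd_or_dvd (hq1 ▸ d2)).resolve_left n21
  obtain ⟨q2, hq2⟩ := d2'
  have d3' : (X 0 + X 2 - 1 : MvPolynomial (Fin 3) ℝ) ∣ q2 := by
    have h := d3
    rw [hq1, hq2] at h
    have h' := (prime3.dvd_or_dvd h).resolve_left n31
    exact (prime3.dvd_or_dvd h').resolve_left n32
  obtain ⟨q3, hq3⟩ := d3'
  have d4' : (X 1 + X 2 - 1 : MvPolynomial (Fin 3) ℝ) ∣ q3 := by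
    have h := d4
    rw [hq1, hq2, hq3] at h
    have h' := (prime4.dvd_or_dvd h).resolve_left n41
    have h'' := (prime4.dvd_or_dvd h').resolve_left n42
    exact (prime4.dvd_or_dvd h'').resolve_left n43
  obtain ⟨q4, hq4⟩ := d4'
  exact ⟨q4, by rw [hq1, hq2, hq3, hq4]; ring⟩
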